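/- Assume ad < bc, b > 0, d > 0, and let λ, μ : [a/b, c/d] → ℝ be continuous with λ(x) ≥ C > 0 and μ(x) ≥ C > 0. Fix x₀ ∈ (a/b, c/d) and define h(x) = exp(∫_{x₀}^x (λ(y)/(by−a) − μ(y)/(c−dy)) dy) for x ∈ (a/b, c/d). Then h(x) → 0 as x → a/b⁺ and h(x) → 0 as x → c/d⁻. -/

import Mathlib

open Set Filter MeasureTheory intervalIntegral

lemma core_left (p x₀ C K c₁ : ℝ) (f : ℝ → ℝ) (hpx : p < x₀) (hC : 0 < C) (hc₁ : 0 < c₁)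
    (hint : ∀ x ∈ Ioo p x₀, IntervalIntegrable f volume x x₀)
    (hbd : ∀ y ∈ Ioc p x₀, C / (c₁ * (y - p)) - K ≤ f y) :
    Tendsto (fun x => ∫ y in x₀..x, f y) (nhdsWithin p (Ioi p)) atBot := by
  set g : ℝ → ℝ := fun x =>
    C / c₁ * Real.log (x - p) - C / c₁ * Real.log (x₀ - p) + K * (x₀ - x) with hgdef
  have hg : Tendsto g (nhdsWithin p (Ioi p)) atBot := by
    have h1 : Tendsto (fun x : ℝ => x - p) (nhdsWithin p (Ioi p)) (nhdsWithin 0 (Ioi 0)) := by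
      apply tendsto_nhdsWithin_of_tendsto_nhds_of_eventually_within
      · have h0 : Tendsto (fun x : ℝ => x - p) (nhds p) (nhds (p - p)) := tendsto_id.sub_const p
        simpa using h0.mono_left nhdsWithin_le_nhds
      · filter_upwards [self_mem_nhdsWithin] with x hx
        simpa using sub_pos.2 (mem_Ioi.mp hx)
    have h2 : Tendsto (fun x => C / c₁ * Real.log (x - p)) (nhdsWithin p (Ioi p)) atBot := by
      have := (Real.tendsto_log_nhdsGT_zero.comp h1).const_mul_atBot
        (div_pos hC hc₁)
      simpa [Function.comp] using this
    have h3 : Tendsto (fun x => K * (x₀ - x) - C / c₁ * Real.log (x₀ - p))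
        (nhdsWithin p (Ioi p)) (nhds (K * (x₀ - p) - C / c₁ * Real.log (x₀ - p))) := by
      apply Tendsto.mono_left _ nhdsWithin_le_nhds
      exact (((tendsto_const_nhds).sub tendsto_id).const_mul K).sub tendsto_const_nhds
    have := h2.atBot_add h3
    refine this.congr fun x => by ring
  apply tendsto_atBot_mono' _ _ hg
  filter_upwards [Ioo_mem_nhdsGT_of_mem (left_mem_Ico.2 hpx)] with x hx
  have hxp : p < x := hx.1
  have hxx₀ : x < x₀ := hx.2
  -- integral of the lower bound function
  have hcont : ContinuousOn (fun y => C / (c₁ * (y - p))) (Icc x x₀) := by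
    apply ContinuousOn.div continuousOn_const
    · exact (continuous_const.mul (continuous_id.sub continuous_const)).continuousOn
    · intro y hy
      have : 0 < y - p := sub_pos.2 (lt_of_lt_of_le hxp hy.1)
      positivity
  have hint1 : IntervalIntegrable (fun y => C / (c₁ * (y - p))) volume x x₀ :=
    hcont.intervalIntegrable_of_Icc hxx₀.le
  have hint2 : IntervalIntegrable (fun y => C / (c₁ * (y - p)) - K) volume x x₀ :=
    hint1.sub intervalIntegrable_const
  have hcomp : (∫ y in x..x₀, C / (c₁ * (y - p)))
      = C / c₁ * Real.log (x₀ - p) - C / c₁ * Real.log (x - p) := by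
    rw [intervalIntegral.integral_eq_sub_of_hasDerivAt
      (f := fun y => C / c₁ * Real.log (y - p)) (f' := fun y => C / (c₁ * (y - p))) ?_ hint1]
    intro y hy
    rw [uIcc_of_le hxx₀.le] at hy
    have hyp : (0:ℝ) < y - p := sub_pos.2 (lt_of_lt_of_le hxp hy.1)
    have := ((Real.hasDerivAt_log hyp.ne').comp y
      ((hasDerivAt_id y).sub_const p)).const_mul (C / c₁)
    exact this.congr_deriv (by rw [mul_one, ← div_eq_mul_inv, div_div])
  have hmono : (∫ y in x..x₀, (C / (c₁ * (y - p)) - K)) ≤ ∫ y in x..x₀, f y := by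
    apply intervalIntegral.integral_mono_on hxx₀.le hint2 (hint x hx)
    intro y hy
    exact hbd y ⟨lt_of_lt_of_le hxp hy.1, hy.2⟩
  have hval : (∫ y in x..x₀, (C / (c₁ * (y - p)) - K))
      = C / c₁ * Real.log (x₀ - p) - C / c₁ * Real.log (x - p) - K * (x₀ - x) := by
    rw [intervalIntegral.integral_sub hint1 intervalIntegrable_const, hcomp,
      intervalIntegral.integral_const]
    simp [smul_eq_mul]; ring
  have hsymm : (∫ y in x₀..x, f y) = -∫ y in x..x₀, f y := intervalIntegral.integral_symm x x₀
  rw [hsymm]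
  rw [hval] at hmono
  simp only [hgdef]
  linarith

lemma core_right (q x₀ C K c₁ : ℝ) (f : ℝ → ℝ) (hxq : x₀ < q) (hC : 0 < C) (hc₁ : 0 < c₁)
    (hint : ∀ x ∈ Ioo x₀ q, IntervalIntegrable f volume x₀ x)
    (hbd : ∀ y ∈ Ico x₀ q, f y ≤ K - C / (c₁ * (q - y))) :
    Tendsto (fun x => ∫ y in x₀..x, f y) (nhdsWithin q (Iio q)) atBot := by
  have hcore := core_left (-q) (-x₀) C K c₁ (fun u => -f (-u)) (neg_lt_neg hxq) hC hc₁ ?_ ?_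
  · have hneg : Tendsto (fun x : ℝ => -x) (nhdsWithin q (Iio q)) (nhdsWithin (-q) (Ioi (-q))) := by
      apply tendsto_nhdsWithin_of_tendsto_nhds_of_eventually_within
      · exact (continuous_neg.tendsto q).mono_left nhdsWithin_le_nhds
      · filter_upwards [self_mem_nhdsWithin] with x hx
        simpa using hx
    have := hcore.comp hneg
    apply this.congr
    intro x
    simp only [Function.comp]
    rw [intervalIntegral.integral_neg, intervalIntegral.integral_comp_neg f, neg_neg,
      intervalIntegral.integral_symm]
    simp
  · intro x hx
    have hfx : IntervalIntegrable f volume x₀ (-x) := hint (-x) ⟨by linarith [hx.2], by linarith [hx.1]⟩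
    have := ((IntervalIntegrable.iff_comp_neg (f := f)).mp hfx).neg
    simpa [Pi.neg_def] using this.symm
  · intro u hu
    have hy : (-u) ∈ Ico x₀ q := ⟨by linarith [hu.2], by linarith [hu.1]⟩
    have := hbd (-u) hy
    have hqe : q - (-u) = u - (-q) := by ring
    rw [hqe] at this
    linarith

theorem stmt_3 (a b c d C x₀ : ℝ) (lam μ : ℝ → ℝ)
    (hb : 0 < b) (hd : 0 < d) (habcd : a * d < b * c) (hC : 0 < C)
    (hlam_cont : ContinuousOn lam (Icc (a/b) (c/d)))
    (hμ_cont : ContinuousOn μ (Icc (a/b) (c/d)))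
    (hlam : ∀ x ∈ Icc (a/b) (c/d), C ≤ lam x)
    (hμ : ∀ x ∈ Icc (a/b) (c/d), C ≤ μ x)
    (hx₀ : x₀ ∈ Ioo (a/b) (c/d))
    (h : ℝ → ℝ)
    (hdef : ∀ x ∈ Ioo (a/b) (c/d),
      h x = Real.exp (∫ y in x₀..x, (lam y / (b*y - a) - μ y / (c - d*y)))) :
    Tendsto h (nhdsWithin (a/b) (Ioi (a/b))) (nhds 0) ∧
    Tendsto h (nhdsWithin (c/d) (Iio (c/d))) (nhds 0) := by
  have hpq : a/b < c/d := by rw [div_lt_div_iff₀ hb hd]; linarith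
  set f : ℝ → ℝ := fun y => lam y / (b*y - a) - μ y / (c - d*y) with hf
  have hba : ∀ y : ℝ, b*y - a = b*(y - a/b) := fun y => by field_simp
  have hdc : ∀ y : ℝ, c - d*y = d*(c/d - y) := fun y => by field_simp
  have hb1 : ∀ y ∈ Ioo (a/b) (c/d), 0 < b*y - a := by
    intro y hy; rw [hba]; have := sub_pos.2 hy.1; positivity
  have hd1 : ∀ y ∈ Ioo (a/b) (c/d), 0 < c - d*y := by
    intro y hy; rw [hdc]; have := sub_pos.2 hy.2; positivity
  have hfc : ContinuousOn f (Ioo (a/b) (c/d)) := by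
    apply ContinuousOn.sub
    · exact (hlam_cont.mono Ioo_subset_Icc_self).div
        ((continuous_const.mul continuous_id).sub continuous_const).continuousOn
        (fun y hy => (hb1 y hy).ne')
    · exact (hμ_cont.mono Ioo_subset_Icc_self).div
        (continuous_const.sub (continuous_const.mul continuous_id)).continuousOn
        (fun y hy => (hd1 y hy).ne')
  obtain ⟨zμ, hzμ, hzμ2⟩ := isCompact_Icc.exists_isMaxOn (nonempty_Icc.2 hpq.le) hμ_cont
  obtain ⟨zl, hzl, hzl2⟩ := isCompact_Icc.exists_isMaxOn (nonempty_Icc.2 hpq.le) hlam_cont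
  have hzμpos : 0 < μ zμ := lt_of_lt_of_le hC (hμ zμ hzμ)
  have hzlpos : 0 < lam zl := lt_of_lt_of_le hC (hlam zl hzl)
  constructor
  · -- left endpoint
    have hIL : ∀ x ∈ Ioo (a/b) x₀, IntervalIntegrable f volume x x₀ := by
      intro x hx
      apply ContinuousOn.intervalIntegrable_of_Icc hx.2.le
      apply hfc.mono
      intro y hy
      exact ⟨lt_of_lt_of_le hx.1 hy.1, lt_of_le_of_lt hy.2 hx₀.2⟩
    have hKd : 0 < c - d*x₀ := hd1 x₀ hx₀
    set K : ℝ := μ zμ / (c - d*x₀) with hK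
    have hbdL : ∀ y ∈ Ioc (a/b) x₀, C / (b*(y - a/b)) - K ≤ f y := by
      intro y hy
      have hyI : y ∈ Icc (a/b) (c/d) := ⟨hy.1.le, hy.2.trans hx₀.2.le⟩
      have hby : 0 < b*(y - a/b) := by have := sub_pos.2 hy.1; positivity
      have h1 : C / (b*(y - a/b)) ≤ lam y / (b*y - a) := by
        rw [hba y]; gcongr; exact hlam y hyI
      have h2 : μ y / (c - d*y) ≤ K := by
        rw [hK]
        apply div_le_div₀ hzμpos.le (hzμ2 hyI) hKd
        nlinarith [hy.2]
      simp only [hf]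
      linarith
    have htL := core_left (a/b) x₀ C K b f hx₀.1 hC hb hIL hbdL
    have hexpL : Tendsto (fun x => Real.exp (∫ y in x₀..x, f y))
        (nhdsWithin (a/b) (Ioi (a/b))) (nhds 0) := Real.tendsto_exp_atBot.comp htL
    apply Tendsto.congr' _ hexpL
    filter_upwards [Ioo_mem_nhdsGT_of_mem (left_mem_Ico.2 hpq)] with x hx
    exact (hdef x hx).symm
  · -- right endpoint
    have hIR : ∀ x ∈ Ioo x₀ (c/d), IntervalIntegrable f volume x₀ x := by
      intro x hx
      apply ContinuousOn.intervalIntegrable_of_Icc hx.1.le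
      apply hfc.mono
      intro y hy
      exact ⟨lt_of_lt_of_le hx₀.1 hy.1, lt_of_le_of_lt hy.2 hx.2⟩
    have hKb : 0 < b*x₀ - a := hb1 x₀ hx₀
    set K : ℝ := lam zl / (b*x₀ - a) with hK
    have hbdR : ∀ y ∈ Ico x₀ (c/d), f y ≤ K - C / (d*(c/d - y)) := by
      intro y hy
      have hyI : y ∈ Icc (a/b) (c/d) := ⟨hx₀.1.le.trans hy.1, hy.2.le⟩
      have hdy : 0 < d*(c/d - y) := by have := sub_pos.2 hy.2; positivity
      have h1 : lam y / (b*y - a) ≤ K := by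
        rw [hK]
        apply div_le_div₀ hzlpos.le (hzl2 hyI) hKb
        nlinarith [hy.1]
      have h2 : C / (d*(c/d - y)) ≤ μ y / (c - d*y) := by
        rw [hdc y]; gcongr; exact hμ y hyI
      simp only [hf]
      linarith
    have htR := core_right (c/d) x₀ C K d f hx₀.2 hC hd hIR hbdR
    have hexpR : Tendsto (fun x => Real.exp (∫ y in x₀..x, f y))
        (nhdsWithin (c/d) (Iio (c/d))) (nhds 0) := Real.tendsto_exp_atBot.comp htR
    apply Tendsto.congr' _ hexpR
    filter_upwards [Ioo_mem_nhdsLT_of_mem (right_mem_Ioc.2 hpq)] with x hx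
    exact (hdef x hx).symm
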